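/- Let ρ̄ ≥ 0. For each l ∈ ℕ let ρ^l : ℕ → ℝ be a non-increasing, nonnegative summable sequence with ∑_{i=0}^∞ ρ^l_i ≤ ρ̄, and let c^l : ℕ → ℂ satisfy ∑_{i=0}^∞ |c^l_i|² ≤ 1. Assume that for each fixed i ∈ ℕ, |c^l_i| → 0 as l → ∞. Then ∑_{i=0}^∞ |c^l_i|² ρ^l_i → 0 as l → ∞. -/

import Mathlib

open Filter

set_option maxHeartbeats 1000000 in
/-- Abstract core of the type-III theorem: if for each `l` the occupation densities
`ρ l` are non-increasing, nonnegative, summable with total at most `ρ̄`, the overlaps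
`c l` satisfy Bessel's inequality `∑' i, ‖c l i‖² ≤ 1`, and each fixed overlap
`‖c l i‖` tends to `0` as `l → ∞`, then `∑' i, ‖c l i‖² * ρ l i → 0`. -/
theorem tendsto_tsum_overlap_sq_mul_occupation
    (ρBar : ℝ) (hρBar : 0 ≤ ρBar)
    (ρ : ℕ → ℕ → ℝ) (c : ℕ → ℕ → ℂ)
    (hmono : ∀ l, Antitone (ρ l)) (hnonneg : ∀ l i, 0 ≤ ρ l i)
    (hsumm : ∀ l, Summable (ρ l)) (hsum : ∀ l, ∑' i, ρ l i ≤ ρBar)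
    (hcsumm : ∀ l, Summable fun i => ‖c l i‖ ^ 2)
    (hbessel : ∀ l, ∑' i, ‖c l i‖ ^ 2 ≤ 1)
    (hconv : ∀ i, Tendsto (fun l => ‖c l i‖) atTop (nhds 0)) :
    Tendsto (fun l => ∑' i, ‖c l i‖ ^ 2 * ρ l i) atTop (nhds 0) := by
  have hρle : ∀ l i, ρ l i * ((i : ℝ) + 1) ≤ ρBar := by
    intro l i
    calc ρ l i * ((i : ℝ) + 1)
        = ∑ _j ∈ Finset.range (i + 1), ρ l i := by
          simp [Finset.sum_const, mul_comm]
      _ ≤ ∑ j ∈ Finset.range (i + 1), ρ l j :=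
          Finset.sum_le_sum fun j hj =>
            hmono l (Nat.le_of_lt_succ (Finset.mem_range.mp hj))
      _ ≤ ∑' j, ρ l j := Summable.sum_le_tsum _ (fun j _ => hnonneg l j) (hsumm l)
      _ ≤ ρBar := hsum l
  have hρle' : ∀ l i, ρ l i ≤ ρBar / ((i : ℝ) + 1) := fun l i => by
    rw [le_div_iff₀ (by positivity)]; exact hρle l i
  have hρB : ∀ l i, ρ l i ≤ ρBar := by
    intro l i
    refine (hρle' l i).trans (div_le_self hρBar ?_)
    have : (0 : ℝ) ≤ (i : ℝ) := Nat.cast_nonneg i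
    linarith
  have hfnn : ∀ l i, 0 ≤ ‖c l i‖ ^ 2 * ρ l i := fun l i => by
    exact mul_nonneg (by positivity) (hnonneg l i)
  have hfsumm : ∀ l, Summable (fun i => ‖c l i‖ ^ 2 * ρ l i) := fun l =>
    Summable.of_nonneg_of_le (hfnn l)
      (fun i => mul_le_mul_of_nonneg_left (hρB l i) (by positivity))
      ((hcsumm l).mul_right ρBar)
  rw [Metric.tendsto_atTop]
  intro ε hε
  obtain ⟨N, hN⟩ := exists_nat_gt (2 * ρBar / ε)
  have hNpos : 2 * ρBar < ε * ((N : ℝ) + 1) := by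
    have h1 : 2 * ρBar < (N : ℝ) * ε := (div_lt_iff₀ hε).mp hN
    nlinarith
  have hhead : Tendsto (fun l => ∑ i ∈ Finset.range N, ‖c l i‖ ^ 2) atTop (nhds 0) := by
    have := tendsto_finset_sum (Finset.range N)
      (fun i (_ : i ∈ Finset.range N) => ((hconv i).pow 2))
    simpa using this
  have hε' : 0 < ε / (2 * (ρBar + 1)) := by positivity
  obtain ⟨l₀, hl₀⟩ := (Metric.tendsto_atTop.mp hhead) _ hε'
  refine ⟨l₀, fun l hl => ?_⟩
  have hls := hl₀ l hl
  rw [Real.dist_eq, sub_zero] at hls ⊢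
  have hheadnn : 0 ≤ ∑ i ∈ Finset.range N, ‖c l i‖ ^ 2 := by positivity
  rw [abs_of_nonneg (tsum_nonneg (hfnn l))]
  rw [abs_of_nonneg hheadnn] at hls
  have hsplit := (Summable.sum_add_tsum_nat_add N (hfsumm l)).symm
  -- head bound
  have hheadbd : ∑ i ∈ Finset.range N, ‖c l i‖ ^ 2 * ρ l i < ε / 2 := by
    have h1 : ∑ i ∈ Finset.range N, ‖c l i‖ ^ 2 * ρ l i
        ≤ ∑ i ∈ Finset.range N, ‖c l i‖ ^ 2 * ρBar :=
      Finset.sum_le_sum fun i _ => mul_le_mul_of_nonneg_left (hρB l i) (by positivity)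
    rw [← Finset.sum_mul] at h1
    have h2 : (∑ i ∈ Finset.range N, ‖c l i‖ ^ 2) * ρBar
        < (ε / (2 * (ρBar + 1))) * (ρBar + 1) := by
      have ha := mul_lt_mul_of_pos_right hls (show (0:ℝ) < ρBar + 1 by linarith)
      have hb : (∑ i ∈ Finset.range N, ‖c l i‖ ^ 2) * ρBar
          ≤ (∑ i ∈ Finset.range N, ‖c l i‖ ^ 2) * (ρBar + 1) :=
        mul_le_mul_of_nonneg_left (by linarith) hheadnn
      linarith
    have h3 : (ε / (2 * (ρBar + 1))) * (ρBar + 1) = ε / 2 := by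
      field_simp
    linarith
  -- tail bound
  have hcsummN : Summable fun i => ‖c l (i + N)‖ ^ 2 :=
    (summable_nat_add_iff N).mpr (hcsumm l)
  have htailc : ∑' i, ‖c l (i + N)‖ ^ 2 ≤ 1 := by
    have := Summable.sum_add_tsum_nat_add N (hcsumm l)
    have hb := hbessel l
    have hnn : 0 ≤ ∑ i ∈ Finset.range N, ‖c l i‖ ^ 2 := by positivity
    linarith
  have htailbd : ∑' i, ‖c l (i + N)‖ ^ 2 * ρ l (i + N) < ε / 2 := by
    have h1 : ∑' i, ‖c l (i + N)‖ ^ 2 * ρ l (i + N)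
        ≤ ∑' i, ‖c l (i + N)‖ ^ 2 * (ρBar / ((N : ℝ) + 1)) := by
      refine Summable.tsum_le_tsum (fun i => ?_) ((summable_nat_add_iff N).mpr (hfsumm l))
        (hcsummN.mul_right _)
      refine mul_le_mul_of_nonneg_left ?_ (by positivity)
      refine (hmono l (Nat.le_add_left N i)).trans ?_
      refine (hρle' l N).trans ?_
      exact le_refl _
    rw [tsum_mul_right] at h1
    have h2 : (∑' i, ‖c l (i + N)‖ ^ 2) * (ρBar / ((N : ℝ) + 1))
        ≤ 1 * (ρBar / ((N : ℝ) + 1)) :=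
      mul_le_mul_of_nonneg_right htailc (by positivity)
    have h3 : ρBar / ((N : ℝ) + 1) < ε / 2 := by
      rw [div_lt_div_iff₀ (by positivity) (by norm_num)]
      linarith
    linarith
  calc ∑' i, ‖c l i‖ ^ 2 * ρ l i
      = (∑ i ∈ Finset.range N, ‖c l i‖ ^ 2 * ρ l i)
        + ∑' i, ‖c l (i + N)‖ ^ 2 * ρ l (i + N) := hsplit
    _ < ε / 2 + ε / 2 := by linarith
    _ = ε := by ring
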